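/- For all complex z with Re(z) > 1, the Kurepa function satisfies the functional equation K(z) − K(z−1) = Γ(z), where K(z) = ∫₀^∞ e^{-t}(t^z − 1)/(t − 1) dt and Γ(z) = ∫₀^∞ e^{-t} t^{z-1} dt. -/

import Mathlib

open MeasureTheory Set Real

/-- Norm bound for `t^w - 1`. -/
lemma cpow_sub_one_norm_le (w : ℂ) {t : ℝ} (ht : 0 < t) :
    ‖(t : ℂ) ^ w - 1‖ ≤ ‖w‖ * (t ^ (w.re - 1) + 1) * |t - 1| := by
  set s : Set ℝ := Set.uIcc 1 t with hs
  have hspos : ∀ u ∈ s, 0 < u := by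
    intro u hu
    rcases le_total 1 t with h | h
    · rw [hs, Set.uIcc_of_le h] at hu; linarith [hu.1]
    · rw [hs, Set.uIcc_of_ge h] at hu; linarith [hu.1]
  have hderiv : ∀ u ∈ s, HasDerivWithinAt (fun u : ℝ => (u : ℂ) ^ w)
      (w * (u : ℂ) ^ (w - 1)) s u := by
    intro u hu
    have hu0 : 0 < u := hspos u hu
    have h2 : (u : ℂ) ∈ Complex.slitPlane := Complex.ofReal_mem_slitPlane.2 hu0
    have := ((((hasDerivAt_id (u : ℂ)).cpow_const (c := w) h2)).comp_ofReal)
    simpa using this.hasDerivWithinAt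
  have hbound : ∀ u ∈ s, ‖w * (u : ℂ) ^ (w - 1)‖ ≤ ‖w‖ * (t ^ (w.re - 1) + 1) := by
    intro u hu
    have hu0 : 0 < u := hspos u hu
    have hnorm : ‖(u : ℂ) ^ (w - 1)‖ = u ^ (w.re - 1) := by
      rw [Complex.norm_cpow_eq_rpow_re_of_pos hu0]
      norm_num
    rw [norm_mul, hnorm]
    have hupow : u ^ (w.re - 1) ≤ t ^ (w.re - 1) + 1 := by
      rcases le_or_gt 0 (w.re - 1) with ha | ha
      · have hum : u ≤ max 1 t := by
          rcases le_total 1 t with h | h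
          · rw [hs, Set.uIcc_of_le h] at hu
            exact le_trans hu.2 (le_max_right _ _)
          · rw [hs, Set.uIcc_of_ge h] at hu
            exact le_trans hu.2 (le_max_left _ _)
        have hle := Real.rpow_le_rpow hu0.le hum ha
        rcases max_cases 1 t with ⟨he, _⟩ | ⟨he, _⟩ <;> rw [he] at hle
        · rw [Real.one_rpow] at hle
          have : (0:ℝ) ≤ t ^ (w.re - 1) := Real.rpow_nonneg ht.le _
          linarith
        · linarith
      · have hmu : min 1 t ≤ u := by
          rcases le_total 1 t with h | h
          · rw [hs, Set.uIcc_of_le h] at hu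
            exact le_trans (min_le_left _ _) hu.1
          · rw [hs, Set.uIcc_of_ge h] at hu
            exact le_trans (min_le_right _ _) hu.1
        have hmin0 : 0 < min 1 t := lt_min one_pos ht
        have hle := Real.rpow_le_rpow_of_nonpos hmin0 hmu ha.le
        rcases min_cases 1 t with ⟨he, _⟩ | ⟨he, _⟩ <;> rw [he] at hle
        · rw [Real.one_rpow] at hle
          have : (0:ℝ) ≤ t ^ (w.re - 1) := Real.rpow_nonneg ht.le _
          linarith
        · linarith
    have h0w : (0:ℝ) ≤ ‖w‖ := norm_nonneg _
    nlinarith [Real.rpow_nonneg hu0.le (w.re - 1)]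
  have hconv : Convex ℝ s := convex_uIcc 1 t
  have h1s : (1:ℝ) ∈ s := Set.left_mem_uIcc
  have hts : t ∈ s := Set.right_mem_uIcc
  have hkey := hconv.norm_image_sub_le_of_norm_hasDerivWithin_le hderiv hbound h1s hts
  simp only [Complex.ofReal_one, Complex.one_cpow] at hkey
  calc ‖(t : ℂ) ^ w - 1‖ ≤ ‖w‖ * (t ^ (w.re - 1) + 1) * ‖t - 1‖ := hkey
    _ = ‖w‖ * (t ^ (w.re - 1) + 1) * |t - 1| := by rw [Real.norm_eq_abs]

/-- Integrability of the Kurepa integrand for `0 < Re w`. -/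
lemma kurepa_integrand_integrable {w : ℂ} (hw : 0 < w.re) :
    IntegrableOn (fun t : ℝ =>
      (Real.exp (-t) : ℂ) * ((t : ℂ) ^ w - 1) / ((t : ℂ) - 1)) (Ioi 0) := by
  set f : ℝ → ℂ := fun t =>
    (Real.exp (-t) : ℂ) * ((t : ℂ) ^ w - 1) / ((t : ℂ) - 1) with hf
  have hnull : volume (Ioi (0:ℝ) ∩ {1}) = 0 :=
    measure_mono_null (inter_subset_right) (measure_singleton 1)
  -- measurability
  have hmeas : AEStronglyMeasurable f (volume.restrict (Ioi 0)) := by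
    have hcont : ContinuousOn f (Ioi 0 \ {1}) := by
      apply ContinuousOn.div
      · apply ContinuousOn.mul
        · exact (Complex.continuous_ofReal.comp (Real.continuous_exp.comp
            continuous_neg)).continuousOn
        · apply ContinuousOn.sub _ continuousOn_const
          apply continuousOn_of_forall_continuousAt
          intro x hx
          have hx0 : 0 < x := hx.1
          have : ContinuousAt (fun y : ℂ => y ^ w) (x : ℂ) :=
            continuousAt_cpow_const (Complex.ofReal_mem_slitPlane.2 hx0)
          exact this.comp Complex.continuous_ofReal.continuousAt
      · exact (Complex.continuous_ofReal.sub continuous_const).continuousOn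
      · intro x hx
        refine sub_ne_zero.mpr fun h => hx.2 ?_
        have : x = 1 := by exact_mod_cast h
        simp [this]
    have h1 := hcont.aestronglyMeasurable (μ := volume)
      (measurableSet_Ioi.diff (measurableSet_singleton 1))
    have heq : (Ioi (0:ℝ) \ {1} : Set ℝ) =ᵐ[volume] Ioi (0:ℝ) :=
      diff_ae_eq_self.mpr hnull
    rwa [Measure.restrict_congr_set heq] at h1
  -- majorant
  set g : ℝ → ℝ := fun t =>
    ‖w‖ * (Real.exp (-t) * t ^ (w.re - 1) + Real.exp (-t)) with hg
  have hgint : IntegrableOn g (Ioi 0) := by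
    apply Integrable.const_mul
    apply Integrable.add
    · exact Real.GammaIntegral_convergent hw
    · have := Real.GammaIntegral_convergent (one_pos)
      simp at this; exact this
  refine hgint.mono' hmeas ?_
  rw [ae_restrict_iff' measurableSet_Ioi]
  filter_upwards with t ht
  have ht0 : 0 < t := ht
  by_cases h1 : t = 1
  · subst h1
    have : f 1 = 0 := by simp [hf]
    rw [this, norm_zero, hg]
    positivity
  · have hC : ‖(t : ℂ) - 1‖ = |t - 1| := by
      rw [show ((t:ℂ) - 1) = ((t - 1 : ℝ) : ℂ) by push_cast; ring, Complex.norm_real,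
        Real.norm_eq_abs]
    have habs : 0 < |t - 1| := abs_pos.mpr (sub_ne_zero.mpr h1)
    have hnum := cpow_sub_one_norm_le w ht0
    have : ‖f t‖ = Real.exp (-t) * ‖(t : ℂ) ^ w - 1‖ / |t - 1| := by
      rw [hf]
      simp only [norm_div, norm_mul, hC, Complex.norm_real, Real.norm_eq_abs,
        abs_of_pos (Real.exp_pos _)]
    rw [this, hg]
    rw [div_le_iff₀ habs]
    have hexp : 0 < Real.exp (-t) := Real.exp_pos _
    calc Real.exp (-t) * ‖(t : ℂ) ^ w - 1‖
        ≤ Real.exp (-t) * (‖w‖ * (t ^ (w.re - 1) + 1) * |t - 1|) := by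
          exact mul_le_mul_of_nonneg_left hnum hexp.le
      _ = ‖w‖ * (Real.exp (-t) * t ^ (w.re - 1) + Real.exp (-t)) * |t - 1| := by ring

/-- The Kurepa function `K(z) = ∫₀^∞ e^{-t}(t^z - 1)/(t - 1) dt`. -/
noncomputable def kurepa (z : ℂ) : ℂ :=
  ∫ t in Set.Ioi (0 : ℝ), (Real.exp (-t) : ℂ) * ((t : ℂ) ^ z - 1) / ((t : ℂ) - 1)

/-- For `Re z > 1`, the Kurepa function satisfies `K(z) - K(z-1) = Γ(z)`. -/
theorem kurepa_functional_equation (z : ℂ) (hz : 1 < z.re) :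
    kurepa z - kurepa (z - 1) = Complex.Gamma z := by
  have hz0 : 0 < z.re := by linarith
  have hz1 : 0 < (z - 1).re := by simp [Complex.sub_re]; linarith
  have hI1 := kurepa_integrand_integrable hz0
  have hI2 := kurepa_integrand_integrable hz1
  rw [kurepa, kurepa, ← integral_sub hI1 hI2,
    Complex.Gamma_eq_integral hz0, Complex.GammaIntegral]
  apply setIntegral_congr_ae measurableSet_Ioi
  have hne : ∀ᵐ t : ℝ, t ≠ 1 := by
    rw [ae_iff]
    have : {a : ℝ | ¬a ≠ 1} = {1} := by ext a; simp
    rw [this]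
    exact measure_singleton 1
  filter_upwards [hne] with t ht1 ht
  have ht0 : 0 < t := ht
  have htC : (t : ℂ) - 1 ≠ 0 := by
    refine sub_ne_zero.mpr fun h => ht1 ?_
    exact_mod_cast h
  have htz : (t : ℂ) ≠ 0 := Complex.ofReal_ne_zero.mpr ht0.ne'
  have hsplit : (t : ℂ) ^ z = (t : ℂ) ^ (z - 1) * t := by
    rw [show z = z - 1 + 1 by ring, Complex.cpow_add _ _ htz, Complex.cpow_one]
    ring_nf
  field_simp
  rw [hsplit]
  ring
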